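/- arXiv:2206.08216 — 4 statements merged into one kernel-verified Lean document; each statement's English description precedes it below -/
import Mathlib

section
/- (Theorem 2) Let α ≥ 0, ν > 1, and λ > 0, and let Σ_β(λ, ν) = J_β(λ, ν)⁻¹ K_β(λ, ν) J_β(λ, ν)⁻¹ denote the asymptotic covariance matrix of the rescaled MDPDE with tuning parameter β, built from the GE score vector u and density f as in Theorem 1. Assume J_0(1, ν) and J_α(1, ν) are invertible. Then the asymptotic relative efficiencies ARE(λ̂_α) = Σ_0(λ, ν)_{11} / Σ_α(λ, ν)_{11} and ARE(ν̂_α) = Σ_0(λ, ν)_{22} / Σ_α(λ, ν)_{22} do not depend on λ: Σ_0(λ, ν)_{11} / Σ_α(λ, ν)_{11} = Σ_0(1, ν)_{11} / Σ_α(1, ν)_{11} and Σ_0(λ, ν)_{22} / Σ_α(λ, ν)_{22} = Σ_0(1, ν)_{22} / Σ_α(1, ν)_{22}. -/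
open Real Set

/-- The generalized exponential (GE) density with rate `l > 0` and shape `v > 0`. -/
noncomputable def geDensity (l v x : ℝ) : ℝ :=
  l * v * Real.exp (-(l * x)) * (1 - Real.exp (-(l * x))) ^ (v - 1)

/-- The GE score vector `u(x) = (u_λ(x), u_ν(x))ᵀ`. -/
noncomputable def geScore (l v x : ℝ) : Fin 2 → ℝ :=
  ![1 / l - x + (v - 1) * x * Real.exp (-(l * x)) / (1 - Real.exp (-(l * x))),
    1 / v + Real.log (1 - Real.exp (-(l * x)))]

/-- `J_β(λ, ν) = ∫₀^∞ u(x) u(x)ᵀ f(x; λ, ν)^(1+β) dx`. -/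
noncomputable def geJ (b l v : ℝ) : Matrix (Fin 2) (Fin 2) ℝ :=
  Matrix.of fun i j =>
    ∫ x in Ioi (0 : ℝ), geScore l v x i * geScore l v x j * geDensity l v x ^ (1 + b)

/-- `ξ_α(λ, ν) = ∫₀^∞ u(x) f(x; λ, ν)^(1+α) dx`. -/
noncomputable def geXi (a l v : ℝ) : Fin 2 → ℝ := fun i =>
  ∫ x in Ioi (0 : ℝ), geScore l v x i * geDensity l v x ^ (1 + a)

/-- `K_α(λ, ν) = J_{2α}(λ, ν) − ξ_α(λ, ν) ξ_α(λ, ν)ᵀ`. -/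
noncomputable def geK (a l v : ℝ) : Matrix (Fin 2) (Fin 2) ℝ :=
  geJ (2 * a) l v - Matrix.of fun i j => geXi a l v i * geXi a l v j

/-- The asymptotic covariance matrix `Σ_α(λ, ν) = J_α⁻¹ K_α J_α⁻¹` of the rescaled MDPDE. -/
noncomputable def geSigma (a l v : ℝ) : Matrix (Fin 2) (Fin 2) ℝ :=
  (geJ a l v)⁻¹ * geK a l v * (geJ a l v)⁻¹

open MeasureTheory

lemma geDensity_scale (l v x : ℝ) : geDensity l v x = l * geDensity 1 v (l * x) := by
  simp only [geDensity, one_mul]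
  ring

lemma geDensity_one_nonneg (v : ℝ) (hv : 0 ≤ v) {y : ℝ} (hy : 0 < y) :
    0 ≤ geDensity 1 v y := by
  have h1 : Real.exp (-(1 * y)) ≤ 1 := by
    rw [Real.exp_le_one_iff]; linarith
  unfold geDensity
  have : (0:ℝ) ≤ 1 - Real.exp (-(1 * y)) := by linarith
  positivity

lemma geScore_scale (l v : ℝ) (hl : l ≠ 0) (x : ℝ) (i : Fin 2) :
    geScore l v x i = ![1 / l, 1] i * geScore 1 v (l * x) i := by
  fin_cases i
  · simp only [geScore, one_mul, Fin.zero_eta, Matrix.cons_val_zero]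
    by_cases h : (1 : ℝ) - Real.exp (-(l * x)) = 0
    · rw [h]
      simp only [div_zero]
      field_simp
      ring
    · field_simp
  · simp [geScore]

lemma geJ_scale (b v : ℝ) {l : ℝ} (hl : 0 < l) (hv : 0 ≤ v) (i j : Fin 2) :
    geJ b l v i j = ![1/l, 1] i * ![1/l, 1] j * l ^ b * geJ b 1 v i j := by
  have key : ∀ x ∈ Ioi (0:ℝ),
      geScore l v x i * geScore l v x j * geDensity l v x ^ (1 + b)
      = (![1/l,1] i * ![1/l,1] j * l ^ (1+b)) *
        (fun y => geScore 1 v y i * geScore 1 v y j * geDensity 1 v y ^ (1+b)) (l * x) := by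
    intro x hx
    rw [geScore_scale l v hl.ne' x i, geScore_scale l v hl.ne' x j, geDensity_scale,
        Real.mul_rpow hl.le (geDensity_one_nonneg v hv (mul_pos hl (mem_Ioi.mp hx)))]
    ring
  have h1 : geJ b l v i j = (![1/l,1] i * ![1/l,1] j * l ^ (1+b)) *
      ∫ x in Ioi (0:ℝ),
        (fun y => geScore 1 v y i * geScore 1 v y j * geDensity 1 v y ^ (1+b)) (l * x) := by
    rw [← integral_const_mul]
    exact setIntegral_congr_fun measurableSet_Ioi key
  rw [h1, integral_comp_mul_left_Ioi (fun y => geScore 1 v y i * geScore 1 v y j * geDensity 1 v y ^ (1+b)) 0 hl, mul_zero, smul_eq_mul]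
  rw [Real.rpow_add hl, Real.rpow_one]
  unfold geJ
  simp only [Matrix.of_apply]
  ring_nf
  rw [mul_inv_cancel₀ hl.ne', one_mul]

lemma geXi_scale (a v : ℝ) {l : ℝ} (hl : 0 < l) (hv : 0 ≤ v) (i : Fin 2) :
    geXi a l v i = ![1/l, 1] i * l ^ a * geXi a 1 v i := by
  have key : ∀ x ∈ Ioi (0:ℝ),
      geScore l v x i * geDensity l v x ^ (1 + a)
      = (![1/l,1] i * l ^ (1+a)) *
        (fun y => geScore 1 v y i * geDensity 1 v y ^ (1+a)) (l * x) := by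
    intro x hx
    rw [geScore_scale l v hl.ne' x i, geDensity_scale,
        Real.mul_rpow hl.le (geDensity_one_nonneg v hv (mul_pos hl (mem_Ioi.mp hx)))]
    ring
  have h1 : geXi a l v i = (![1/l,1] i * l ^ (1+a)) *
      ∫ x in Ioi (0:ℝ),
        (fun y => geScore 1 v y i * geDensity 1 v y ^ (1+a)) (l * x) := by
    rw [← integral_const_mul]
    exact setIntegral_congr_fun measurableSet_Ioi key
  rw [h1, integral_comp_mul_left_Ioi (fun y => geScore 1 v y i * geDensity 1 v y ^ (1+a)) 0 hl, mul_zero, smul_eq_mul]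
  rw [Real.rpow_add hl, Real.rpow_one]
  unfold geXi
  ring_nf
  rw [mul_inv_cancel₀ hl.ne', one_mul]

lemma geJ_scale' (b v : ℝ) {l : ℝ} (hl : 0 < l) (hv : 0 ≤ v) :
    geJ b l v = l ^ b • (Matrix.diagonal ![1/l,1] * geJ b 1 v * Matrix.diagonal ![1/l,1]) := by
  ext i j
  rw [Matrix.smul_apply, Matrix.mul_diagonal, Matrix.diagonal_mul, geJ_scale b v hl hv i j,
    smul_eq_mul]
  ring

lemma geK_scale' (a v : ℝ) {l : ℝ} (hl : 0 < l) (hv : 0 ≤ v) :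
    geK a l v = l ^ (2*a) • (Matrix.diagonal ![1/l,1] * geK a 1 v * Matrix.diagonal ![1/l,1]) := by
  have h2 : l ^ (2*a) = l ^ a * l ^ a := by rw [← Real.rpow_add hl, two_mul]
  ext i j
  rw [Matrix.smul_apply, Matrix.mul_diagonal, Matrix.diagonal_mul, smul_eq_mul]
  unfold geK
  simp only [Matrix.sub_apply, Matrix.of_apply]
  rw [geJ_scale (2*a) v hl hv i j, geXi_scale a v hl hv i, geXi_scale a v hl hv j, h2]
  ring

lemma diag_de {l : ℝ} (hl : 0 < l) :
    Matrix.diagonal (![1/l,1] : Fin 2 → ℝ) * Matrix.diagonal ![l,1] = 1 := by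
  ext i j
  fin_cases i <;> fin_cases j <;>
    simp [Matrix.mul_apply, Fin.sum_univ_two, Matrix.one_apply, Matrix.diagonal, hl.ne']

lemma diag_ed {l : ℝ} (hl : 0 < l) :
    Matrix.diagonal (![l,1] : Fin 2 → ℝ) * Matrix.diagonal ![1/l,1] = 1 := by
  ext i j
  fin_cases i <;> fin_cases j <;>
    simp [Matrix.mul_apply, Fin.sum_univ_two, Matrix.one_apply, Matrix.diagonal, hl.ne']

lemma geJ_inv (b v : ℝ) {l : ℝ} (hl : 0 < l) (hv : 0 ≤ v) (hJ : IsUnit (geJ b 1 v)) :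
    (geJ b l v)⁻¹ =
      (l ^ b)⁻¹ • (Matrix.diagonal ![l,1] * (geJ b 1 v)⁻¹ * Matrix.diagonal ![l,1]) := by
  have hJJ : geJ b 1 v * (geJ b 1 v)⁻¹ = 1 :=
    Matrix.mul_nonsing_inv _ ((Matrix.isUnit_iff_isUnit_det _).mp hJ)
  apply Matrix.inv_eq_right_inv
  rw [geJ_scale' b v hl hv, Matrix.smul_mul, Matrix.mul_smul, smul_smul,
    mul_inv_cancel₀ (Real.rpow_pos_of_pos hl b).ne', one_smul]
  calc Matrix.diagonal ![1/l,1] * geJ b 1 v * Matrix.diagonal ![1/l,1] *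
        (Matrix.diagonal ![l,1] * (geJ b 1 v)⁻¹ * Matrix.diagonal ![l,1])
      = (Matrix.diagonal ![1/l,1] * geJ b 1 v) *
        ((Matrix.diagonal ![1/l,1] * Matrix.diagonal ![l,1]) *
          ((geJ b 1 v)⁻¹ * Matrix.diagonal ![l,1])) := by simp only [Matrix.mul_assoc]
    _ = (Matrix.diagonal ![1/l,1] * (geJ b 1 v * (geJ b 1 v)⁻¹)) * Matrix.diagonal ![l,1] := by
        rw [diag_de hl, Matrix.one_mul]; simp only [Matrix.mul_assoc]
    _ = 1 := by rw [hJJ, Matrix.mul_one, diag_de hl]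

lemma geSigma_scale (b v : ℝ) {l : ℝ} (hl : 0 < l) (hv : 0 ≤ v) (hJ : IsUnit (geJ b 1 v))
    (i : Fin 2) :
    geSigma b l v i i = (![l,1] i)^2 * geSigma b 1 v i i := by
  have hc : (l:ℝ) ^ b ≠ 0 := (Real.rpow_pos_of_pos hl b).ne'
  have h2 : l ^ (2*b) = l ^ b * l ^ b := by rw [← Real.rpow_add hl, two_mul]
  have hmat : geSigma b l v = Matrix.diagonal ![l,1] * geSigma b 1 v * Matrix.diagonal ![l,1] := by
    unfold geSigma
    rw [geJ_inv b v hl hv hJ, geK_scale' b v hl hv]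
    simp only [Matrix.smul_mul, Matrix.mul_smul, smul_smul]
    rw [show (l^b)⁻¹ * (l ^ (2*b) * (l^b)⁻¹) = 1 by rw [h2]; field_simp, one_smul]
    set E := Matrix.diagonal (![l,1] : Fin 2 → ℝ)
    set D := Matrix.diagonal (![1/l,1] : Fin 2 → ℝ)
    set I := (geJ b 1 v)⁻¹
    set K := geK b 1 v
    calc E * I * E * (D * K * D) * (E * I * E)
        = (E * I) * ((E * D) * (K * ((D * E) * (I * E)))) := by simp only [Matrix.mul_assoc]
      _ = E * (I * K * I) * E := by
          rw [diag_ed hl, diag_de hl, Matrix.one_mul, Matrix.one_mul]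
          simp only [Matrix.mul_assoc]
  rw [hmat, Matrix.mul_diagonal, Matrix.diagonal_mul]
  ring

/-- Theorem 2: the asymptotic relative efficiencies of the MDPDE estimators of `λ` and `ν`,
`ARE(λ̂_α) = Σ_0(λ,ν)₁₁ / Σ_α(λ,ν)₁₁` and `ARE(ν̂_α) = Σ_0(λ,ν)₂₂ / Σ_α(λ,ν)₂₂`,
do not depend on `λ`. -/
theorem ge_ARE_independent_of_rate (a v : ℝ) (ha : 0 ≤ a) (hv : 1 < v)
    (hJ0 : IsUnit (geJ 0 1 v)) (hJa : IsUnit (geJ a 1 v)) :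
    ∀ l : ℝ, 0 < l →
      geSigma 0 l v 0 0 / geSigma a l v 0 0 = geSigma 0 1 v 0 0 / geSigma a 1 v 0 0 ∧
      geSigma 0 l v 1 1 / geSigma a l v 1 1 = geSigma 0 1 v 1 1 / geSigma a 1 v 1 1 := by
  intro l hl
  have hv0 : (0:ℝ) ≤ v := by linarith
  constructor
  · rw [geSigma_scale 0 v hl hv0 hJ0 0, geSigma_scale a v hl hv0 hJa 0]
    simp only [Matrix.cons_val_zero]
    rw [mul_div_mul_left _ _ (pow_ne_zero 2 hl.ne')]
  · rw [geSigma_scale 0 v hl hv0 hJ0 1, geSigma_scale a v hl hv0 hJa 1]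
    simp
end

section
/- Let α > 0, λ > 0, and ν > 1, let f(x; λ, ν) be the GE density, and let u_λ, u_ν be the GE score functions. Then the weighted score functions x ↦ u_λ(x) f(x; λ, ν)^α and x ↦ u_ν(x) f(x; λ, ν)^α both tend to 0 as x → 0⁺ and tend to 0 as x → ∞. -/
open Real Set Filter
open scoped Topology

/-- The GE score function with respect to the rate parameter `λ`. -/
noncomputable def geScoreRate (l v x : ℝ) : ℝ :=
  1 / l - x + (v - 1) * x * Real.exp (-(l * x)) / (1 - Real.exp (-(l * x)))

/-- The GE score function with respect to the shape parameter `ν`. -/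
noncomputable def geScoreShape (l v x : ℝ) : ℝ :=
  1 / v + Real.log (1 - Real.exp (-(l * x)))

/-- Auxiliary: the density raised to power `a`, in factored form. -/
noncomputable def geF (a l v x : ℝ) : ℝ :=
  (l * v) ^ a * Real.exp (-(a * (l * x))) * (1 - Real.exp (-(l * x))) ^ (a * (v - 1))

lemma aux_xexp (b : ℝ) (hb : 0 < b) :
    Tendsto (fun x : ℝ => x * Real.exp (-(b * x))) atTop (nhds 0) := by
  have h := (tendsto_pow_mul_exp_neg_atTop_nhds_zero 1).comp
    (tendsto_id.const_mul_atTop hb)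
  have h2 := h.const_mul (1 / b)
  refine Tendsto.congr (fun x => ?_) (by simpa using h2)
  show b⁻¹ * (b * x * Real.exp (-(b * x))) = x * Real.exp (-(b * x))
  field_simp

lemma aux_exp_neg (b : ℝ) (hb : 0 < b) :
    Tendsto (fun x : ℝ => Real.exp (-(b * x))) atTop (nhds 0) := by
  have : Tendsto (fun x : ℝ => -(b * x)) atTop atBot :=
    tendsto_neg_atBot_iff.mpr (tendsto_id.const_mul_atTop hb)
  exact Real.tendsto_exp_atBot.comp this

lemma aux_Spos (l : ℝ) (hl : 0 < l) {x : ℝ} (hx : 0 < x) :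
    0 < 1 - Real.exp (-(l * x)) := by
  have h : Real.exp (-(l * x)) < 1 := by
    rw [Real.exp_lt_one_iff]
    nlinarith
  linarith

lemma aux_key (a l v : ℝ) (hl : 0 < l) (hv : 1 < v) {x : ℝ} (hx : 0 < x) :
    geDensity l v x ^ a = geF a l v x := by
  have hS := aux_Spos l hl hx
  have hE : (0:ℝ) < Real.exp (-(l * x)) := Real.exp_pos _
  have hlv : (0:ℝ) ≤ l * v := by positivity
  unfold geDensity geF
  rw [Real.mul_rpow (mul_nonneg hlv hE.le) (Real.rpow_nonneg hS.le _),
    Real.mul_rpow hlv hE.le, ← Real.exp_mul, ← Real.rpow_mul hS.le]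
  ring_nf

/-- `S` tends to `0` within `(0, ∞)` as `x → 0⁺`. -/
lemma aux_S_nhds (l : ℝ) (hl : 0 < l) :
    Tendsto (fun x : ℝ => 1 - Real.exp (-(l * x))) (nhdsWithin 0 (Ioi 0)) (nhdsWithin 0 (Ioi 0)) := by
  refine tendsto_nhdsWithin_of_tendsto_nhds_of_eventually_within _ ?_ ?_
  · have hc : Continuous fun x : ℝ => 1 - Real.exp (-(l * x)) := by continuity
    exact (hc.tendsto' 0 0 (by simp)).mono_left nhdsWithin_le_nhds
  · exact eventually_nhdsWithin_of_forall fun x hx => aux_Spos l hl hx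

/-- `S` tends to `1` as `x → ∞`. -/
lemma aux_S_top (l : ℝ) (hl : 0 < l) :
    Tendsto (fun x : ℝ => 1 - Real.exp (-(l * x))) atTop (nhds 1) := by
  simpa using tendsto_const_nhds.sub (aux_exp_neg l hl)

/-- `S ^ r` tends to `1` as `x → ∞`, for any real `r`. -/
lemma aux_Sr_top (l r : ℝ) (hl : 0 < l) :
    Tendsto (fun x : ℝ => (1 - Real.exp (-(l * x))) ^ r) atTop (nhds 1) := by
  have h := ((Real.continuousAt_rpow_const 1 r (Or.inl one_ne_zero)).tendsto).comp
    (aux_S_top l hl)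
  simpa [Real.one_rpow, Function.comp_def] using h

lemma aux_Ea0 (a l v : ℝ) :
    Tendsto (fun x : ℝ => (l * v) ^ a * Real.exp (-(a * (l * x))))
      (nhdsWithin 0 (Ioi 0)) (nhds ((l * v) ^ a * 1)) := by
  have hc : Continuous fun x : ℝ => (l * v) ^ a * Real.exp (-(a * (l * x))) := by continuity
  exact (hc.tendsto' 0 _ (by simp)).mono_left nhdsWithin_le_nhds

lemma aux_F0 (a l v : ℝ) (ha : 0 < a) (hl : 0 < l) (hv : 1 < v) :
    Tendsto (geF a l v) (nhdsWithin 0 (Ioi 0)) (nhds 0) := by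
  have hc : 0 < a * (v - 1) := mul_pos ha (by linarith)
  have h2 : Tendsto (fun x : ℝ => (1 - Real.exp (-(l * x))) ^ (a * (v - 1)))
      (nhdsWithin 0 (Ioi 0)) (nhds 0) := by
    have := ((Real.continuousAt_rpow_const 0 (a * (v - 1)) (Or.inr hc.le)).tendsto).comp
      ((aux_S_nhds l hl).mono_right nhdsWithin_le_nhds)
    simpa [Real.zero_rpow hc.ne', Function.comp_def] using this
  show Tendsto (fun x => (l * v) ^ a * Real.exp (-(a * (l * x))) * (1 - Real.exp (-(l * x))) ^ (a * (v - 1))) _ _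
  simpa [geF] using (aux_Ea0 a l v).mul h2

lemma aux_Ftop (a l v : ℝ) (ha : 0 < a) (hl : 0 < l) (hv : 1 < v) :
    Tendsto (geF a l v) atTop (nhds 0) := by
  have h1 : Tendsto (fun x : ℝ => Real.exp (-(a * (l * x)))) atTop (nhds 0) := by
    refine (aux_exp_neg (a * l) (by positivity)).congr fun x => ?_
    rw [mul_assoc]
  have h2 := aux_Sr_top l (a * (v - 1)) hl
  have h := (tendsto_const_nhds (x := (l * v) ^ a)).mul h1 |>.mul h2
  show Tendsto (fun x => (l * v) ^ a * Real.exp (-(a * (l * x))) * (1 - Real.exp (-(l * x))) ^ (a * (v - 1))) _ _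
  simpa [geF] using h

/-- `x / S → 1/l` as `x → 0⁺`. -/
lemma aux_xdivS (l : ℝ) (hl : 0 < l) :
    Tendsto (fun x : ℝ => x / (1 - Real.exp (-(l * x)))) (nhdsWithin 0 (Ioi 0)) (nhds (1 / l)) := by
  have hd : HasDerivAt (fun x : ℝ => 1 - Real.exp (-(l * x))) l 0 := by
    have h1 : HasDerivAt (fun x : ℝ => -(l * x)) (-l) 0 := by
      simpa [Pi.neg_def] using ((hasDerivAt_id (0:ℝ)).const_mul l).neg
    have h2 := (Real.hasDerivAt_exp (-(l * 0))).comp 0 h1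
    have h3 := (hasDerivAt_const (0:ℝ) (1:ℝ)).sub h2
    simpa [Function.comp_def, Pi.sub_def] using h3
  have hs := hasDerivAt_iff_tendsto_slope.mp hd
  have hs2 : Tendsto (fun x : ℝ => (1 - Real.exp (-(l * x))) / x)
      (nhdsWithin 0 (Ioi 0)) (nhds l) := by
    refine Tendsto.congr (fun x => ?_)
      (hs.mono_left (nhdsWithin_mono 0 (fun x hx => ne_of_gt hx)))
    simp [slope_def_field]
  have := hs2.inv₀ hl.ne'
  exact Tendsto.congr (fun x => rfl) (by simpa [one_div] using this)

/-- For `α > 0`, `λ > 0` and `ν > 1`, the weighted score functions `u_λ(x) f(x; λ, ν)^α`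
and `u_ν(x) f(x; λ, ν)^α` tend to `0` both as `x → 0⁺` and as `x → ∞`. -/
theorem ge_weighted_scores_vanish (a l v : ℝ) (ha : 0 < a) (hl : 0 < l) (hv : 1 < v) :
    Tendsto (fun x => geScoreRate l v x * geDensity l v x ^ a)
      (nhdsWithin 0 (Ioi 0)) (nhds 0) ∧
    Tendsto (fun x => geScoreRate l v x * geDensity l v x ^ a) atTop (nhds 0) ∧
    Tendsto (fun x => geScoreShape l v x * geDensity l v x ^ a)
      (nhdsWithin 0 (Ioi 0)) (nhds 0) ∧
    Tendsto (fun x => geScoreShape l v x * geDensity l v x ^ a) atTop (nhds 0) := by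
  have hc : 0 < a * (v - 1) := mul_pos ha (by linarith)
  have hev0 : ∀ {g : ℝ → ℝ}, (fun x => g x * geF a l v x)
      =ᶠ[nhdsWithin 0 (Ioi 0)] (fun x => g x * geDensity l v x ^ a) := by
    intro g
    refine eventually_nhdsWithin_of_forall fun x hx => ?_
    show g x * geF a l v x = g x * geDensity l v x ^ a
    rw [aux_key a l v hl hv hx]
  have hevtop : ∀ {g : ℝ → ℝ}, (fun x => g x * geF a l v x)
      =ᶠ[atTop] (fun x => g x * geDensity l v x ^ a) := by
    intro g
    refine (eventually_gt_atTop 0).mono fun x hx => ?_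
    show g x * geF a l v x = g x * geDensity l v x ^ a
    rw [aux_key a l v hl hv hx]
  refine ⟨?_, ?_, ?_, ?_⟩
  · -- rate score at 0⁺
    have hE0 : Tendsto (fun x : ℝ => Real.exp (-(l * x))) (nhdsWithin 0 (Ioi 0)) (nhds 1) := by
      have hcE : Continuous fun x : ℝ => Real.exp (-(l * x)) := by continuity
      exact (hcE.tendsto' 0 1 (by simp)).mono_left nhdsWithin_le_nhds
    have hid : Tendsto (fun x : ℝ => x) (nhdsWithin 0 (Ioi 0)) (nhds 0) :=
      (continuous_id.tendsto 0).mono_left nhdsWithin_le_nhds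
    have hscore0 : Tendsto (geScoreRate l v) (nhdsWithin 0 (Ioi 0)) (nhds (v / l)) := by
      have h := ((tendsto_const_nhds (x := 1 / l)).sub hid).add
        ((tendsto_const_nhds (x := v - 1)).mul (hE0.mul (aux_xdivS l hl)))
      have hval : 1 / l - 0 + (v - 1) * (1 * (1 / l)) = v / l := by
        field_simp
        ring
      rw [hval] at h
      refine Tendsto.congr (fun x => ?_) h
      unfold geScoreRate
      ring
    refine Tendsto.congr' hev0 ?_
    simpa using hscore0.mul (aux_F0 a l v ha hl hv)
  · -- rate score at ∞
    set c := a * (v - 1) with hcdef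
    set G : ℝ → ℝ := fun x => l⁻¹ * geF a l v x
      - (x * Real.exp (-(a * (l * x)))) * ((l * v) ^ a * (1 - Real.exp (-(l * x))) ^ c)
      + ((v - 1) * (l * v) ^ a) * (x * Real.exp (-((1 + a) * (l * x))))
        * (1 - Real.exp (-(l * x))) ^ (c - 1) with hGdef
    have hGtop : Tendsto G atTop (nhds 0) := by
      have t1 := (tendsto_const_nhds (x := 1 / l)).mul (aux_Ftop a l v ha hl hv)
      have hx1 : Tendsto (fun x : ℝ => x * Real.exp (-(a * (l * x)))) atTop (nhds 0) := by
        refine (aux_xexp (a * l) (by positivity)).congr fun x => ?_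
        rw [mul_assoc]
      have hx2 : Tendsto (fun x : ℝ => x * Real.exp (-((1 + a) * (l * x)))) atTop (nhds 0) := by
        refine (aux_xexp ((1 + a) * l) (by positivity)).congr fun x => ?_
        rw [mul_assoc]
      have t2 := hx1.mul ((tendsto_const_nhds (x := (l * v) ^ a)).mul (aux_Sr_top l c hl))
      have t3 := ((tendsto_const_nhds (x := (v - 1) * (l * v) ^ a)).mul hx2).mul
        (aux_Sr_top l (c - 1) hl)
      have h := (t1.sub t2).add t3
      rw [hGdef]
      simpa using h
    have heq : ∀ x : ℝ, 0 < x → geScoreRate l v x * geF a l v x = G x := by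
      intro x hx
      have hS := aux_Spos l hl hx
      have h1 : Real.exp (-((1 + a) * (l * x)))
          = Real.exp (-(l * x)) * Real.exp (-(a * (l * x))) := by
        rw [← Real.exp_add]
        ring_nf
      have h2 : (1 - Real.exp (-(l * x))) ^ (c - 1)
          = (1 - Real.exp (-(l * x))) ^ c / (1 - Real.exp (-(l * x))) := by
        rw [Real.rpow_sub hS, Real.rpow_one]
      rw [hGdef]
      simp only [geScoreRate, geF, ← hcdef]
      rw [h1, h2]
      field_simp
    refine Tendsto.congr' hevtop ?_
    exact Tendsto.congr' (((eventually_gt_atTop 0).mono fun x hx => (heq x hx).symm)) hGtop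
  · -- shape score at 0⁺
    have hlog : Tendsto (fun x : ℝ => Real.log (1 - Real.exp (-(l * x)))
        * (1 - Real.exp (-(l * x))) ^ (a * (v - 1))) (nhdsWithin 0 (Ioi 0)) (nhds 0) :=
      Tendsto.congr (fun x => rfl)
        ((tendsto_log_mul_rpow_nhdsGT_zero hc).comp (aux_S_nhds l hl))
    have h := ((tendsto_const_nhds (x := 1 / v)).mul (aux_F0 a l v ha hl hv)).add
      ((aux_Ea0 a l v).mul hlog)
    refine Tendsto.congr' hev0 ?_
    refine Tendsto.congr (fun x => ?_) (by simpa using h)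
    simp only [geScoreShape, geF]
    ring
  · -- shape score at ∞
    have hlog : Tendsto (fun x : ℝ => Real.log (1 - Real.exp (-(l * x)))) atTop
        (nhds (Real.log 1)) :=
      ((Real.continuousAt_log one_ne_zero).tendsto).comp (aux_S_top l hl)
    have hscore : Tendsto (geScoreShape l v) atTop (nhds (1 / v + Real.log 1)) :=
      (tendsto_const_nhds (x := 1 / v)).add hlog
    refine Tendsto.congr' hevtop ?_
    simpa [Real.log_one] using hscore.mul (aux_Ftop a l v ha hl hv)
end

section
/- (Theorem 3) Let λ > 0 and ν > 1, let f(x; λ, ν) be the GE density, and let u_λ, u_ν be the GE score functions. For α ≥ 0, both of the weighted score functions x ↦ u_λ(x) f(x; λ, ν)^α and x ↦ u_ν(x) f(x; λ, ν)^α are bounded on (0, ∞) if and only if α > 0; equivalently, the influence function of the minimum density power divergence functional with tuning parameter α at the GE model, each of whose components is an affine image of these weighted scores, has bounded components if and only if α > 0. -/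
open Real Set

open Filter Topology

/-- A continuous function on `(0, ∞)` tending to `0` at `0⁺` and at `∞` is bounded. -/
lemma bdd_of_tendsto_zero {g : ℝ → ℝ} (hc : ContinuousOn g (Ioi 0))
    (h0 : Filter.Tendsto g (nhdsWithin 0 (Ioi 0)) (nhds 0))
    (hi : Filter.Tendsto g Filter.atTop (nhds 0)) :
    ∃ M : ℝ, ∀ x ∈ Ioi (0:ℝ), |g x| ≤ M := by
  have habs : ∀ᶠ y in 𝓝 (0:ℝ), |y| ≤ 1 := by
    have h1 : Icc (-1:ℝ) 1 ∈ 𝓝 (0:ℝ) := Icc_mem_nhds (by norm_num) (by norm_num)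
    filter_upwards [h1] with y hy
    exact abs_le.mpr hy
  obtain ⟨ε, hε, hsub⟩ := mem_nhdsGT_iff_exists_Ioo_subset.mp (h0.eventually habs)
  obtain ⟨N, hN⟩ := eventually_atTop.mp (hi.eventually habs)
  have hε0 : (0:ℝ) < ε := hε
  have hKsub : Icc (ε/2) (max N ε) ⊆ Ioi (0:ℝ) := fun x hx =>
    lt_of_lt_of_le (by linarith) hx.1
  obtain ⟨C, hC⟩ := isCompact_Icc.exists_bound_of_continuousOn (hc.mono hKsub)
  refine ⟨max 1 C, fun x hx => ?_⟩
  rcases lt_or_ge x ε with h | h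
  · exact le_max_of_le_left (hsub ⟨hx, h⟩)
  · rcases le_or_gt x (max N ε) with h2 | h2
    · have hxK : x ∈ Icc (ε/2) (max N ε) := ⟨by linarith, h2⟩
      exact le_max_of_le_right (by simpa [Real.norm_eq_abs] using hC x hxK)
    · exact le_max_of_le_left (hN x ((le_max_left N ε).trans h2.le))

section Aux

variable {a l v : ℝ}

lemma s_pos (hl : 0 < l) {x : ℝ} (hx : 0 < x) : 0 < 1 - Real.exp (-(l * x)) := by
  have h : -(l * x) < 0 := by nlinarith
  have := Real.exp_lt_one_iff.mpr h
  linarith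

lemma geDensity_nonneg (hl : 0 < l) (hv : 1 < v) {x : ℝ} (hx : 0 < x) :
    0 ≤ geDensity l v x := by
  have hs := (s_pos hl hx).le
  have ht := (Real.exp_pos (-(l * x))).le
  unfold geDensity
  have h1 : (0:ℝ) ≤ l * v := by nlinarith
  positivity

lemma geDensity_cont (hv : 1 < v) : Continuous (geDensity l v) := by
  unfold geDensity
  have h1 : Continuous fun x : ℝ => 1 - Real.exp (-(l * x)) := by continuity
  exact (by continuity : Continuous fun x : ℝ => l * v * Real.exp (-(l * x))).mul
    (h1.rpow_const (fun x => Or.inr (by linarith)))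

lemma geDensityPow_cont (ha : 0 ≤ a) (hv : 1 < v) :
    Continuous (fun x => geDensity l v x ^ a) :=
  (geDensity_cont hv).rpow_const (fun x => Or.inr ha)

lemma geDensity_zero (hv : 1 < v) : geDensity l v 0 = 0 := by
  simp [geDensity, Real.zero_rpow (show v - 1 ≠ 0 by linarith)]

lemma tendsto_t_atTop (hl : 0 < l) :
    Filter.Tendsto (fun x : ℝ => Real.exp (-(l * x))) Filter.atTop (nhds 0) := by
  have h1 : Filter.Tendsto (fun x : ℝ => l * x) Filter.atTop Filter.atTop :=
    Filter.Tendsto.const_mul_atTop hl tendsto_id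
  exact Real.tendsto_exp_atBot.comp (tendsto_neg_atTop_atBot.comp h1)

lemma tendsto_s_atTop (hl : 0 < l) :
    Filter.Tendsto (fun x : ℝ => 1 - Real.exp (-(l * x))) Filter.atTop (nhds 1) := by
  have := (tendsto_const_nhds (x := (1:ℝ)) (f := Filter.atTop)).sub (tendsto_t_atTop hl)
  simpa using this

lemma tendsto_D_atTop (hl : 0 < l) (hv : 1 < v) :
    Filter.Tendsto (geDensity l v) Filter.atTop (nhds 0) := by
  have hsp : Filter.Tendsto (fun x : ℝ => (1 - Real.exp (-(l * x))) ^ (v - 1))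
      Filter.atTop (nhds 1) := by
    have hc : ContinuousAt (fun y : ℝ => y ^ (v - 1)) 1 :=
      Real.continuousAt_rpow_const 1 (v - 1) (Or.inl one_ne_zero)
    have := hc.tendsto.comp (tendsto_s_atTop hl)
    simpa [Function.comp_def, Real.one_rpow] using this
  have h1 : Filter.Tendsto (fun x : ℝ => l * v * Real.exp (-(l * x)))
      Filter.atTop (nhds 0) := by
    have := (tendsto_t_atTop hl).const_mul (l * v)
    simpa using this
  have := h1.mul hsp
  rw [zero_mul] at this
  exact this

lemma tendsto_Dpow_atTop (ha : 0 < a) (hl : 0 < l) (hv : 1 < v) :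
    Filter.Tendsto (fun x => geDensity l v x ^ a) Filter.atTop (nhds 0) := by
  have hc : ContinuousAt (fun y : ℝ => y ^ a) 0 :=
    Real.continuousAt_rpow_const 0 a (Or.inr ha.le)
  have := hc.tendsto.comp (tendsto_D_atTop hl hv)
  simpa [Function.comp_def, Real.zero_rpow ha.ne'] using this

lemma tendsto_Dpow_zero (ha : 0 < a) (hl : 0 < l) (hv : 1 < v) :
    Filter.Tendsto (fun x => geDensity l v x ^ a) (nhdsWithin 0 (Ioi 0)) (nhds 0) := by
  have := ((geDensityPow_cont ha.le hv (l := l)).tendsto 0).mono_left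
    (nhdsWithin_le_nhds (s := Ioi (0:ℝ)))
  simpa [geDensity_zero hv, Real.zero_rpow ha.ne'] using this

lemma tendsto_x_exp_neg (c : ℝ) (hc : 0 < c) :
    Filter.Tendsto (fun x : ℝ => x * Real.exp (-(c * x))) Filter.atTop (nhds 0) := by
  have h1 : Filter.Tendsto (fun x : ℝ => c * x) Filter.atTop Filter.atTop :=
    Filter.Tendsto.const_mul_atTop hc tendsto_id
  have h2 := (Real.tendsto_pow_mul_exp_neg_atTop_nhds_zero 1).comp h1
  have h3 := h2.const_mul (1 / c)
  have h4 : Filter.Tendsto (fun x : ℝ => x * Real.exp (-(c * x))) Filter.atTop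
      (nhds (1 / c * 0)) := by
    refine h3.congr fun x => ?_
    simp only [Function.comp]
    field_simp
  simpa using h4

lemma tendsto_xDpow_atTop (ha : 0 < a) (hl : 0 < l) (hv : 1 < v) :
    Filter.Tendsto (fun x => x * geDensity l v x ^ a) Filter.atTop (nhds 0) := by
  have hbig : Filter.Tendsto (fun x : ℝ => (l * v) ^ a * (x * Real.exp (-(a * l * x))))
      Filter.atTop (nhds 0) := by
    have := (tendsto_x_exp_neg (a * l) (by positivity)).const_mul ((l * v) ^ a)
    simpa using this
  apply tendsto_of_tendsto_of_tendsto_of_le_of_le' tendsto_const_nhds hbig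
  · filter_upwards [eventually_gt_atTop (0:ℝ)] with x hx
    exact mul_nonneg hx.le (Real.rpow_nonneg (geDensity_nonneg hl hv hx) a)
  · filter_upwards [eventually_gt_atTop (0:ℝ)] with x hx
    have hs0 := (s_pos hl hx).le
    have hs1 : 1 - Real.exp (-(l * x)) ≤ 1 := by
      have := (Real.exp_pos (-(l * x))).le; linarith
    have hDle : geDensity l v x ≤ l * v * Real.exp (-(l * x)) := by
      unfold geDensity
      have hsp : (1 - Real.exp (-(l * x))) ^ (v - 1) ≤ 1 :=
        Real.rpow_le_one hs0 hs1 (by linarith)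
      have hpos : (0:ℝ) ≤ l * v * Real.exp (-(l * x)) := by positivity
      nlinarith [Real.rpow_nonneg hs0 (v - 1)]
    have hDpowle : geDensity l v x ^ a ≤ (l * v * Real.exp (-(l * x))) ^ a :=
      Real.rpow_le_rpow (geDensity_nonneg hl hv hx) hDle ha.le
    have hrw : (l * v * Real.exp (-(l * x))) ^ a
        = (l * v) ^ a * Real.exp (-(a * l * x)) := by
      rw [Real.mul_rpow (by positivity) (Real.exp_pos _).le,
        Real.rpow_def_of_pos (Real.exp_pos _), Real.log_exp]
      ring_nf
    calc x * geDensity l v x ^ a ≤ x * ((l * v * Real.exp (-(l * x))) ^ a) :=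
          mul_le_mul_of_nonneg_left hDpowle hx.le
      _ = (l * v) ^ a * (x * Real.exp (-(a * l * x))) := by rw [hrw]; ring

lemma tendsto_s_zero (hl : 0 < l) :
    Filter.Tendsto (fun x : ℝ => 1 - Real.exp (-(l * x))) (nhdsWithin 0 (Ioi 0))
      (nhdsWithin 0 (Ioi 0)) := by
  apply tendsto_nhdsWithin_of_tendsto_nhds_of_eventually_within
  · have hc : Continuous fun x : ℝ => 1 - Real.exp (-(l * x)) := by continuity
    have := (hc.tendsto 0).mono_left (nhdsWithin_le_nhds (s := Ioi (0:ℝ)))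
    simpa using this
  · filter_upwards [self_mem_nhdsWithin] with x hx
    exact s_pos hl hx

end Aux

/-- Theorem 3: for `λ > 0`, `ν > 1` and `α ≥ 0`, both weighted score functions
`x ↦ u_λ(x) f(x; λ, ν)^α` and `x ↦ u_ν(x) f(x; λ, ν)^α` are bounded on `(0, ∞)` if and
only if `α > 0`; equivalently, the components of the influence function of the MDPDE
functional with tuning parameter `α` at the GE model are bounded if and only if `α > 0`. -/
theorem ge_influence_bounded_iff (a l v : ℝ) (ha : 0 ≤ a) (hl : 0 < l) (hv : 1 < v) :
    ((∃ M : ℝ, ∀ x ∈ Ioi (0 : ℝ), |geScoreRate l v x * geDensity l v x ^ a| ≤ M) ∧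
     (∃ M : ℝ, ∀ x ∈ Ioi (0 : ℝ), |geScoreShape l v x * geDensity l v x ^ a| ≤ M)) ↔
      0 < a := by
  constructor
  · rintro ⟨-, M, hM⟩
    by_contra hcon
    have ha0 : a = 0 := le_antisymm (not_lt.mp hcon) ha
    subst ha0
    -- At suitable points the shape score is arbitrarily negative.
    have hM0 : 0 ≤ M := by
      have := hM 1 (by norm_num)
      exact (abs_nonneg _).trans this
    set b : ℝ := M + 1 / v + 1 with hb
    have hv0 : (0:ℝ) < v := by linarith
    have hb0 : 0 < b := by positivity
    have hc1 : Real.exp (-b) < 1 := Real.exp_lt_one_iff.mpr (by linarith)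
    have hc0 : 0 < 1 - Real.exp (-b) := by linarith
    set x : ℝ := -Real.log (1 - Real.exp (-b)) / l with hx
    have hlog : Real.log (1 - Real.exp (-b)) < 0 :=
      Real.log_neg hc0 (by linarith [Real.exp_pos (-b)])
    have hxpos : 0 < x := by
      rw [hx]; exact div_pos (by linarith) hl
    have hlx : l * x = -Real.log (1 - Real.exp (-b)) := by
      rw [hx]; field_simp
    have hsx : Real.exp (-(l * x)) = 1 - Real.exp (-b) := by
      rw [hlx, neg_neg, Real.exp_log hc0]
    have hshape : geScoreShape l v x = 1 / v - b := by
      unfold geScoreShape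
      rw [hsx]
      simp only [sub_sub_cancel, Real.log_exp]
      ring
    have := hM x hxpos
    rw [hshape, Real.rpow_zero, mul_one] at this
    have habs : b - 1 / v ≤ |1 / v - b| := by
      rw [abs_sub_comm]; exact le_abs_self _
    have : b - 1 / v ≤ M := habs.trans this
    rw [hb] at this
    linarith
  · intro ha'
    have hDpow0 := tendsto_Dpow_zero ha' hl hv
    have hDpowT := tendsto_Dpow_atTop ha' hl hv
    have hDpowC := geDensityPow_cont (l := l) ha'.le hv
    constructor
    · -- rate component: squeeze by h1 x = (x + v/l) * D x ^ a
      have hcont : Continuous fun x : ℝ => (x + v / l) * geDensity l v x ^ a :=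
        (continuous_id.add continuous_const).mul hDpowC
      have h0 : Filter.Tendsto (fun x : ℝ => (x + v / l) * geDensity l v x ^ a)
          (nhdsWithin 0 (Ioi 0)) (nhds 0) := by
        have := (hcont.tendsto 0).mono_left (nhdsWithin_le_nhds (s := Ioi (0:ℝ)))
        simpa [geDensity_zero hv, Real.zero_rpow ha'.ne'] using this
      have hT : Filter.Tendsto (fun x : ℝ => (x + v / l) * geDensity l v x ^ a)
          Filter.atTop (nhds 0) := by
        have := (tendsto_xDpow_atTop ha' hl hv).add (hDpowT.const_mul (v / l))
        have heq : (fun x : ℝ => x * geDensity l v x ^ a + v / l * geDensity l v x ^ a)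
            = fun x : ℝ => (x + v / l) * geDensity l v x ^ a := by
          funext x; ring
        rw [heq] at this
        simpa using this
      obtain ⟨M, hM⟩ := bdd_of_tendsto_zero hcont.continuousOn h0 hT
      refine ⟨M, fun x hx => ?_⟩
      have hx' : (0:ℝ) < x := hx
      have hs := s_pos hl hx'
      have ht := Real.exp_pos (-(l * x))
      -- key bound: |geScoreRate| ≤ x + v/l
      have hcore : l * x * Real.exp (-(l * x)) ≤ 1 - Real.exp (-(l * x)) := by
        have h1 := Real.add_one_le_exp (l * x)
        have he : Real.exp (-(l * x)) = (Real.exp (l * x))⁻¹ := Real.exp_neg _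
        have hp : (0:ℝ) < Real.exp (l * x) := Real.exp_pos _
        rw [he]
        have h2 : (l * x + 1) * (Real.exp (l * x))⁻¹ ≤ Real.exp (l * x) * (Real.exp (l * x))⁻¹ :=
          mul_le_mul_of_nonneg_right h1 (by positivity)
        rw [mul_inv_cancel₀ hp.ne'] at h2
        nlinarith
      have hT0 : 0 ≤ (v - 1) * x * Real.exp (-(l * x)) / (1 - Real.exp (-(l * x))) := by
        apply div_nonneg _ hs.le
        exact le_of_lt (mul_pos (mul_pos (by linarith) hx') ht)
      have hTle : (v - 1) * x * Real.exp (-(l * x)) / (1 - Real.exp (-(l * x)))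
          ≤ (v - 1) / l := by
        rw [div_le_div_iff₀ hs hl]
        nlinarith [mul_le_mul_of_nonneg_left hcore (show (0:ℝ) ≤ v - 1 by linarith)]
      have h1l : (0:ℝ) < 1 / l := by positivity
      have hsum : 1 / l + (v - 1) / l = v / l := by field_simp; ring
      have hrate : |geScoreRate l v x| ≤ x + v / l := by
        unfold geScoreRate
        rw [abs_le]
        constructor
        · nlinarith
        · nlinarith
      have hDnn : 0 ≤ geDensity l v x ^ a := Real.rpow_nonneg (geDensity_nonneg hl hv hx') a
      calc |geScoreRate l v x * geDensity l v x ^ a|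
          = |geScoreRate l v x| * geDensity l v x ^ a := by
            rw [abs_mul, abs_of_nonneg hDnn]
        _ ≤ (x + v / l) * geDensity l v x ^ a :=
            mul_le_mul_of_nonneg_right hrate hDnn
        _ ≤ |(x + v / l) * geDensity l v x ^ a| := le_abs_self _
        _ ≤ M := hM x hx
    · -- shape component
      have hcont : ContinuousOn (fun x : ℝ => geScoreShape l v x * geDensity l v x ^ a)
          (Ioi 0) := by
        apply ContinuousOn.mul _ hDpowC.continuousOn
        unfold geScoreShape
        apply ContinuousOn.add continuousOn_const
        have hsc : Continuous fun x : ℝ => 1 - Real.exp (-(l * x)) := by continuity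
        exact hsc.continuousOn.log (fun x hx => (s_pos hl hx).ne')
      have hT : Filter.Tendsto (fun x : ℝ => geScoreShape l v x * geDensity l v x ^ a)
          Filter.atTop (nhds 0) := by
        have hlog : Filter.Tendsto (fun x : ℝ => geScoreShape l v x) Filter.atTop
            (nhds (1 / v)) := by
          unfold geScoreShape
          have := ((Real.continuousAt_log one_ne_zero).tendsto).comp (tendsto_s_atTop hl)
          have h2 := (tendsto_const_nhds (x := 1/v) (f := Filter.atTop)).add this
          simpa [Function.comp] using h2
        have := hlog.mul hDpowT
        simpa using this
      have h0 : Filter.Tendsto (fun x : ℝ => geScoreShape l v x * geDensity l v x ^ a)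
          (nhdsWithin 0 (Ioi 0)) (nhds 0) := by
        have hpart1 : Filter.Tendsto (fun x : ℝ => 1 / v * geDensity l v x ^ a)
            (nhdsWithin 0 (Ioi 0)) (nhds 0) := by
          have := hDpow0.const_mul (1 / v)
          simpa using this
        have hpart2 : Filter.Tendsto
            (fun x : ℝ => (l * v * Real.exp (-(l * x))) ^ a *
              (Real.log (1 - Real.exp (-(l * x))) * (1 - Real.exp (-(l * x))) ^ ((v - 1) * a)))
            (nhdsWithin 0 (Ioi 0)) (nhds 0) := by
          have hf1 : Filter.Tendsto (fun x : ℝ => (l * v * Real.exp (-(l * x))) ^ a)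
              (nhdsWithin 0 (Ioi 0)) (nhds ((l * v) ^ a)) := by
            have hc : Continuous fun x : ℝ => (l * v * Real.exp (-(l * x))) ^ a :=
              (by continuity : Continuous fun x : ℝ => l * v * Real.exp (-(l * x))).rpow_const
                (fun x => Or.inr ha'.le)
            have := (hc.tendsto 0).mono_left (nhdsWithin_le_nhds (s := Ioi (0:ℝ)))
            simpa using this
          have hf2 : Filter.Tendsto
              (fun x : ℝ => Real.log (1 - Real.exp (-(l * x))) *
                (1 - Real.exp (-(l * x))) ^ ((v - 1) * a))
              (nhdsWithin 0 (Ioi 0)) (nhds 0) := by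
            have hr : (0:ℝ) < (v - 1) * a := by nlinarith
            exact (tendsto_log_mul_rpow_nhdsGT_zero hr).comp (tendsto_s_zero hl)
          have := hf1.mul hf2
          simpa using this
        have hsum := hpart1.add hpart2
        rw [add_zero] at hsum
        refine Filter.Tendsto.congr' ?_ hsum
        filter_upwards [self_mem_nhdsWithin] with x hx
        have hx' : (0:ℝ) < x := hx
        have hs := (s_pos hl hx').le
        have ht := (Real.exp_pos (-(l * x))).le
        have hlv : (0:ℝ) ≤ l * v := by nlinarith
        have hDsplit : geDensity l v x ^ a
            = (l * v * Real.exp (-(l * x))) ^ a * (1 - Real.exp (-(l * x))) ^ ((v - 1) * a) := by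
          unfold geDensity
          rw [Real.mul_rpow (mul_nonneg hlv ht) (Real.rpow_nonneg hs _),
            Real.rpow_mul hs]
        unfold geScoreShape
        rw [hDsplit]
        ring
      obtain ⟨M, hM⟩ := bdd_of_tendsto_zero hcont h0 hT
      exact ⟨M, hM⟩
end

section
/- Let f > 0 and g > 0 be real numbers. Then the density power divergence integrand converges as the tuning parameter α → 0⁺: lim_{α→0⁺} [ f^(1+α) − (1 + 1/α) f^α g + (1/α) g^(1+α) ] = f − g + g (log g − log f); in particular, for densities f and g (which integrate to one) the density power divergence d_α(g, f) reduces in the limit α → 0 to the Kullback–Leibler divergence ∫ g (log g − log f). -/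
open Real Set Filter

/-- The density power divergence integrand converges, as the tuning parameter `α → 0⁺`,
to the Kullback–Leibler integrand: for `f > 0` and `g > 0`,
`lim_{α→0⁺} [ f^(1+α) − (1 + 1/α) f^α g + (1/α) g^(1+α) ] = f − g + g (log g − log f)`. -/
theorem dpd_integrand_tendsto_kl (f g : ℝ) (hf : 0 < f) (hg : 0 < g) :
    Tendsto
      (fun a : ℝ => f ^ (1 + a) - (1 + 1 / a) * f ^ a * g + (1 / a) * g ^ (1 + a))
      (nhdsWithin 0 (Ioi 0))
      (nhds (f - g + g * (Real.log g - Real.log f))) := by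
  have hd : HasDerivAt (fun a : ℝ => g ^ a - f ^ a) (Real.log g - Real.log f) 0 := by
    have h1 := (Real.hasStrictDerivAt_const_rpow hg 0).hasDerivAt
    have h2 := (Real.hasStrictDerivAt_const_rpow hf 0).hasDerivAt
    have h := h1.sub h2
    simp only [Real.rpow_zero, one_mul] at h
    exact h
  have hslope : Tendsto (fun a : ℝ => (g ^ a - f ^ a) / a) (nhdsWithin 0 (Ioi 0))
      (nhds (Real.log g - Real.log f)) := by
    have := hasDerivAt_iff_tendsto_slope.mp hd
    have h := this.mono_left (nhdsWithin_mono 0 (by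
      intro x hx
      exact ne_of_gt hx : Ioi (0:ℝ) ⊆ {(0:ℝ)}ᶜ))
    refine h.congr (fun a => ?_)
    simp [slope, Real.rpow_zero, div_eq_inv_mul]
  have h1 : Tendsto (fun a : ℝ => f ^ (1 + a)) (nhdsWithin 0 (Ioi 0)) (nhds f) := by
    have : ContinuousAt (fun a : ℝ => f ^ (1 + a)) 0 := by
      exact (Real.continuousAt_const_rpow (ne_of_gt hf)).comp
        (continuousAt_const.add continuousAt_id)
    simpa using this.continuousWithinAt.tendsto
  have h2 : Tendsto (fun a : ℝ => f ^ a * g) (nhdsWithin 0 (Ioi 0)) (nhds g) := by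
    have : ContinuousAt (fun a : ℝ => f ^ a * g) 0 :=
      (Real.continuousAt_const_rpow (ne_of_gt hf)).mul continuousAt_const
    simpa using this.continuousWithinAt.tendsto
  have h3 : Tendsto (fun a : ℝ => g * ((g ^ a - f ^ a) / a)) (nhdsWithin 0 (Ioi 0))
      (nhds (g * (Real.log g - Real.log f))) := tendsto_const_nhds.mul hslope
  have hcomb := (h1.sub h2).add h3
  refine hcomb.congr' ?_
  filter_upwards [self_mem_nhdsWithin] with a (ha : 0 < a)
  have ha' : a ≠ 0 := ne_of_gt ha
  have hgpow : g ^ (1 + a) = g * g ^ a := by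
    rw [Real.rpow_add hg, Real.rpow_one]
  field_simp [hgpow]
  rw [hgpow]
  ring
end
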